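/- Let 0 < L < U, θ = U/L, λ ∈ [0,1], let α ∈ (1, θ) satisfy (α-1)e^α = θ-1, and set γ(λ) = α + (1-λ)(θ - α) and η(λ) = θ/[θ/γ(λ) + (θ-1)(1 - (1/γ(λ))ln((θ-1)/(γ(λ)-1)))] (with η interpreted by continuity when γ = θ). Then γ: [0,1] → [α, θ] is strictly decreasing with γ(0) = θ, γ(1) = α, and η(0) = 1, η(1) = α, and 1 ≤ η(λ) ≤ γ(λ) for all λ ∈ [0,1]. -/

import Mathlib

theorem stmt_18 (L U θ α : ℝ) (hL : 0 < L) (hLU : L < U) (hθ : θ = U / L)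
    (hα : α ∈ Set.Ioo 1 θ) (hαθ : (α - 1) * Real.exp α = θ - 1)
    (g h : ℝ → ℝ)
    (hg : ∀ lam, g lam = α + (1 - lam) * (θ - α))
    (hh : ∀ lam, h lam =
      θ / (θ / g lam + (θ - 1) * (1 - (1 / g lam) * Real.log ((θ - 1) / (g lam - 1))))) :
    StrictAntiOn g (Set.Icc 0 1) ∧
    (∀ lam ∈ Set.Icc (0:ℝ) 1, g lam ∈ Set.Icc α θ) ∧
    g 0 = θ ∧ g 1 = α ∧ h 0 = 1 ∧ h 1 = α ∧
    (∀ lam ∈ Set.Icc (0:ℝ) 1, 1 ≤ h lam ∧ h lam ≤ g lam) := by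
  obtain ⟨hα1, hαθ'⟩ := hα
  have hθ1 : 1 < θ := hα1.trans hαθ'
  have hθ0 : 0 < θ := by linarith
  have hα0 : 0 < α := by linarith
  -- key bounds for the value of h
  have key : ∀ γ, α ≤ γ → γ ≤ θ →
      1 ≤ θ / (θ / γ + (θ - 1) * (1 - (1 / γ) * Real.log ((θ - 1) / (γ - 1)))) ∧
      θ / (θ / γ + (θ - 1) * (1 - (1 / γ) * Real.log ((θ - 1) / (γ - 1)))) ≤ γ := by
    intro γ hγα hγθ
    have hγ1 : 1 < γ := lt_of_lt_of_le hα1 hγα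
    have hγ0 : 0 < γ := by linarith
    set Lg := Real.log ((θ - 1) / (γ - 1)) with hLg
    have hpos : 0 < (θ - 1) / (γ - 1) := div_pos (by linarith) (by linarith)
    -- upper bound on Lg
    have hL1 : Lg ≤ γ := by
      rw [hLg, Real.log_le_iff_le_exp hpos, div_le_iff₀ (by linarith : (0:ℝ) < γ - 1)]
      have h1 : (α - 1) * Real.exp α ≤ (γ - 1) * Real.exp γ := by
        apply mul_le_mul (by linarith) (Real.exp_le_exp.2 hγα) (Real.exp_pos α).le
          (by linarith)
      calc θ - 1 = (α - 1) * Real.exp α := hαθ.symm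
        _ ≤ (γ - 1) * Real.exp γ := h1
        _ = Real.exp γ * (γ - 1) := by ring
    -- lower bound on (θ-1) * Lg
    have hL2 : θ - γ ≤ (θ - 1) * Lg := by
      have h2 : Real.log ((γ - 1) / (θ - 1)) ≤ (γ - 1) / (θ - 1) - 1 :=
        Real.log_le_sub_one_of_pos (div_pos (by linarith) (by linarith))
      have h3 : Lg = - Real.log ((γ - 1) / (θ - 1)) := by
        rw [hLg, ← Real.log_inv, inv_div]
      have h4 : Real.log ((γ - 1) / (θ - 1)) ≤ (γ - θ) / (θ - 1) := by
        have : (γ - 1) / (θ - 1) - 1 = (γ - θ) / (θ - 1) := by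
          rw [div_sub' (by linarith : θ - 1 ≠ 0)]
          ring_nf
        linarith [h2, this.le]
      have h5 : - ((γ - θ) / (θ - 1)) ≤ Lg := by rw [h3]; linarith
      have h6 : - ((γ - θ) / (θ - 1)) * (θ - 1) = θ - γ := by
        rw [neg_mul, div_mul_cancel₀ _ (by linarith : θ - 1 ≠ 0)]; ring
      nlinarith [h5, h6]
    set D := θ / γ + (θ - 1) * (1 - (1 / γ) * Lg) with hD
    have hDγ : D * γ = θ + (θ - 1) * γ - (θ - 1) * Lg := by
      rw [hD]; field_simp; ring
    have hD1 : θ / γ ≤ D := by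
      rw [div_le_iff₀ hγ0]
      nlinarith [hDγ, hL1, hθ1]
    have hD2 : D ≤ θ := by nlinarith [hDγ, hL2, hγ0]
    have hD0 : 0 < D := lt_of_lt_of_le (by positivity) hD1
    constructor
    · rw [le_div_iff₀ hD0]; linarith
    · rw [div_le_iff₀ hD0]
      have : θ / γ * γ ≤ D * γ := by
        apply mul_le_mul_of_nonneg_right hD1 hγ0.le
      rw [div_mul_cancel₀ _ hγ0.ne'] at this
      linarith
  have hg0 : g 0 = θ := by rw [hg]; ring
  have hg1 : g 1 = α := by rw [hg]; ring
  refine ⟨?_, ?_, hg0, hg1, ?_, ?_, ?_⟩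
  · intro a ha b hb hab
    rw [hg, hg]
    nlinarith [hαθ']
  · intro lam ⟨h0, h1⟩
    rw [hg]
    constructor
    · nlinarith [hαθ']
    · nlinarith [hαθ']
  · rw [hh, hg0, div_self (by linarith : θ - 1 ≠ 0), Real.log_one,
      div_self hθ0.ne']
    have : 1 + (θ - 1) * (1 - 1 / θ * 0) = θ := by ring
    rw [this, div_self hθ0.ne']
  · rw [hh, hg1]
    have he : (θ - 1) / (α - 1) = Real.exp α := by
      rw [div_eq_iff (by intro hc; linarith [hc] : α - 1 ≠ 0)]
      linarith [hαθ]
    rw [he, Real.log_exp]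
    have : 1 - 1 / α * α = 0 := by field_simp; ring
    rw [this, mul_zero, add_zero]
    rw [div_div_eq_mul_div, mul_comm, mul_div_assoc, div_self hθ0.ne', mul_one]
  · intro lam ⟨h0, h1⟩
    have hγα : α ≤ g lam := by rw [hg]; nlinarith [hαθ']
    have hγθ : g lam ≤ θ := by rw [hg]; nlinarith [hαθ']
    obtain ⟨k1, k2⟩ := key (g lam) hγα hγθ
    exact ⟨by rw [hh]; exact k1, by rw [hh]; exact (le_trans k2 le_rfl)⟩
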